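/- For d ≥ 20 and h with d ≤ h ≤ O(e^d), setting m = h/10, there exist unit vectors x¹,…,x^m ∈ S^{d−1} and matrices A¹,…,A^{2^m} ∈ ℝ^{h×d} such that ‖A^s‖_F² ≤ 2d for all s ∈ [2^m], and ‖A^s x^i − A^t x^j‖² ≥ 1/16 for all (s,i) ≠ (t,j). -/

import Mathlib

open MeasureTheory Metric Finset Module
open scoped ENNReal NNReal


lemma packing_exists (n K : ℕ) {R δ : ℝ} (hR : 0 < R) (hδ : 0 < δ)
    (hK : (K : ℝ) ≤ (R / δ) ^ n) :
    ∃ p : Fin K → EuclideanSpace ℝ (Fin n),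
      (∀ k, ‖p k‖ ≤ R) ∧ ∀ k l, k ≠ l → δ ≤ dist (p k) (p l) := by
  classical
  set E := EuclideanSpace ℝ (Fin n) with hE
  let μ : Measure E := volume
  have hfr : finrank ℝ E = n := finrank_euclideanSpace_fin
  let Q : Finset E → Prop := fun S =>
    (∀ y ∈ S, ‖y‖ ≤ R) ∧ (∀ a ∈ S, ∀ b ∈ S, a ≠ b → δ ≤ dist a b)
  have hsmallpos : 0 < μ (ball (0:E) (δ/2)) := measure_ball_pos μ _ (by positivity)
  have hbigfin : μ (closedBall (0:E) (R+δ/2)) < ⊤ := measure_closedBall_lt_top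
  -- upper bound on cardinalities
  have cardbound : ∀ S : Finset E, Q S →
      (S.card : ℝ≥0∞) * μ (ball (0:E) (δ/2)) ≤ μ (closedBall (0:E) (R+δ/2)) := by
    intro S hS
    have hdisj : (S : Set E).PairwiseDisjoint (fun y => ball y (δ/2)) := by
      intro a ha b hb hab
      exact ball_disjoint_ball (by
        have := hS.2 a ha b hb hab; linarith)
    have hmeas := measure_biUnion_finset (μ := μ) hdisj (fun y _ => measurableSet_ball)
    have hsub : (⋃ y ∈ S, ball y (δ/2)) ⊆ closedBall (0:E) (R+δ/2) := by
      intro z hz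
      simp only [Set.mem_iUnion] at hz
      obtain ⟨y, hyS, hzy⟩ := hz
      have h1 : dist z y < δ/2 := mem_ball.1 hzy
      have h2 : ‖y‖ ≤ R := hS.1 y hyS
      have : dist z (0:E) ≤ dist z y + dist y 0 := dist_triangle _ _ _
      rw [mem_closedBall]
      rw [dist_zero_right] at this ⊢
      calc ‖z‖ ≤ dist z y + ‖y‖ := by simpa [dist_zero_right] using this
        _ ≤ R + δ/2 := by linarith
    calc (S.card : ℝ≥0∞) * μ (ball (0:E) (δ/2))
        = ∑ y ∈ S, μ (ball y (δ/2)) := by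
          rw [Finset.sum_congr rfl (fun y _ => Measure.addHaar_ball_center μ y (δ/2))]
          simp [mul_comm]
      _ = μ (⋃ y ∈ S, ball y (δ/2)) := hmeas.symm
      _ ≤ μ (closedBall (0:E) (R+δ/2)) := measure_mono hsub
  have h2 : μ (closedBall (0:E) (R+δ/2)) / μ (ball (0:E) (δ/2)) ≠ ⊤ :=
    (ENNReal.div_lt_top hbigfin.ne hsmallpos.ne').ne
  obtain ⟨N₀, hN₀⟩ := ENNReal.exists_nat_gt h2
  have cardbound' : ∀ S : Finset E, Q S → S.card ≤ N₀ := by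
    intro S hS
    have h1 : (S.card : ℝ≥0∞) ≤ μ (closedBall (0:E) (R+δ/2)) / μ (ball (0:E) (δ/2)) :=
      (ENNReal.le_div_iff_mul_le (Or.inl hsmallpos.ne') (Or.inl measure_ball_lt_top.ne)).2
        (cardbound S hS)
    have := lt_of_le_of_lt h1 hN₀
    exact_mod_cast this.le
  let P : ℕ → Prop := fun c => ∃ S : Finset E, Q S ∧ S.card = c
  have hP0 : P 0 := ⟨∅, ⟨by simp, by simp⟩, by simp⟩
  set N : ℕ := Nat.findGreatest P N₀ with hN
  obtain ⟨S, hQS, hScard⟩ : P N := Nat.findGreatest_spec (Nat.zero_le _) hP0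
  -- maximality gives covering
  have cover : ∀ y : E, ‖y‖ ≤ R → ∃ x ∈ S, dist y x < δ := by
    intro y hy
    by_contra hcon
    push_neg at hcon
    have hyS : y ∉ S := by
      intro h
      have := hcon y h
      have h0 : dist y y = 0 := dist_self y
      linarith
    have hQ' : Q (insert y S) := by
      constructor
      · intro z hz
        rcases Finset.mem_insert.1 hz with rfl | hz
        · exact hy
        · exact hQS.1 z hz
      · intro a ha b hb hab
        rcases Finset.mem_insert.1 ha with ha' | ha'
        · subst ha'
          rcases Finset.mem_insert.1 hb with hb' | hb'
          · exact absurd hb'.symm hab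
          · exact hcon b hb'
        · rcases Finset.mem_insert.1 hb with hb' | hb'
          · subst hb'; exact le_of_le_of_eq (hcon a ha') (dist_comm _ _)
          · exact hQS.2 a ha' b hb' hab
    have hP' : P (N + 1) := ⟨insert y S, hQ', by
      rw [Finset.card_insert_of_notMem hyS, hScard]⟩
    have hle : N + 1 ≤ N₀ := by
      have := cardbound' _ hQ'
      rwa [Finset.card_insert_of_notMem hyS, hScard] at this
    exact Nat.findGreatest_is_greatest (Nat.lt_succ_self N) hle hP'
  -- covering volume bound
  have hsub2 : closedBall (0:E) R ⊆ ⋃ x ∈ S, ball x δ := by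
    intro z hz
    have : ‖z‖ ≤ R := by rwa [mem_closedBall, dist_zero_right] at hz
    obtain ⟨x, hxS, hx⟩ := cover z this
    exact Set.mem_biUnion hxS (mem_ball.2 hx)
  have hvol : ENNReal.ofReal (R ^ n) * μ (ball (0:E) 1)
      ≤ (S.card : ℝ≥0∞) * (ENNReal.ofReal (δ ^ n) * μ (ball (0:E) 1)) := by
    calc ENNReal.ofReal (R ^ n) * μ (ball (0:E) 1)
        = μ (closedBall (0:E) R) := by rw [Measure.addHaar_closedBall μ _ hR.le, hfr]
      _ ≤ μ (⋃ x ∈ S, ball x δ) := measure_mono hsub2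
      _ ≤ ∑ x ∈ S, μ (ball x δ) := measure_biUnion_finset_le S _
      _ = (S.card : ℝ≥0∞) * (ENNReal.ofReal (δ ^ n) * μ (ball (0:E) 1)) := by
          rw [Finset.sum_congr rfl (fun y _ => by rw [Measure.addHaar_ball_of_pos μ y hδ, hfr])]
          simp [mul_comm]
  have hKcard : K ≤ S.card := by
    have h1 : (K : ℝ) * δ ^ n ≤ R ^ n := by
      have hδn : (0:ℝ) < δ ^ n := by positivity
      rw [div_pow] at hK
      calc (K:ℝ) * δ ^ n ≤ (R ^ n / δ ^ n) * δ ^ n := by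
            apply mul_le_mul_of_nonneg_right hK hδn.le
        _ = R ^ n := by field_simp
    have hB0 : μ (ball (0:E) 1) ≠ 0 := (measure_ball_pos μ _ one_pos).ne'
    have hBt : μ (ball (0:E) 1) ≠ ⊤ := measure_ball_lt_top.ne
    have h2 : (K : ℝ≥0∞) * ENNReal.ofReal (δ ^ n) ≤ (S.card : ℝ≥0∞) * ENNReal.ofReal (δ ^ n) := by
      have hl : (K : ℝ≥0∞) * ENNReal.ofReal (δ ^ n) = ENNReal.ofReal ((K:ℝ) * δ ^ n) := by
        rw [ENNReal.ofReal_mul (by positivity)]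
        simp
      have h3 : ENNReal.ofReal (R ^ n) ≤ (S.card : ℝ≥0∞) * ENNReal.ofReal (δ ^ n) := by
        have := hvol
        rw [← mul_assoc] at this
        exact (ENNReal.mul_le_mul_iff_left hB0 hBt).1 this
      calc (K : ℝ≥0∞) * ENNReal.ofReal (δ ^ n) = ENNReal.ofReal ((K:ℝ) * δ ^ n) := hl
        _ ≤ ENNReal.ofReal (R ^ n) := ENNReal.ofReal_le_ofReal h1
        _ ≤ _ := h3
    have hδ0 : ENNReal.ofReal (δ ^ n) ≠ 0 := by
      simp only [ne_eq, ENNReal.ofReal_eq_zero, not_le]; positivity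
    have := (ENNReal.mul_le_mul_iff_left hδ0 ENNReal.ofReal_ne_top).1 h2
    exact_mod_cast this
  -- extract K points
  let e : Fin S.card ≃ {x // x ∈ S} := S.equivFin.symm
  refine ⟨fun k => (e (Fin.castLE hKcard k) : E), ?_, ?_⟩
  · intro k
    exact hQS.1 _ (e (Fin.castLE hKcard k)).2
  · intro k l hkl
    apply hQS.2 _ (e (Fin.castLE hKcard k)).2 _ (e (Fin.castLE hKcard l)).2
    intro h
    apply hkl
    have := e.injective (Subtype.ext h)
    exact Fin.castLE_injective hKcard this

lemma packing_coords (n K : ℕ) {R δ : ℝ} (hR : 0 < R) (hδ : 0 < δ)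
    (hK : (K : ℝ) ≤ (R / δ) ^ n) :
    ∃ w : Fin K → Fin n → ℝ,
      (∀ k, ∑ c, (w k c) ^ 2 ≤ R ^ 2) ∧
      ∀ k l, k ≠ l → δ ^ 2 ≤ ∑ c, (w k c - w l c) ^ 2 := by
  obtain ⟨p, h1, h2⟩ := packing_exists n K hR hδ hK
  refine ⟨fun k c => p k c, ?_, ?_⟩
  · intro k
    have hn := h1 k
    rw [EuclideanSpace.norm_eq] at hn
    have h0 : 0 ≤ ∑ c, (p k c) ^ 2 := by positivity
    have : Real.sqrt (∑ c, ‖p k c‖ ^ 2) ^ 2 ≤ R ^ 2 :=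
      pow_le_pow_left₀ (Real.sqrt_nonneg _) hn 2
    rwa [Real.sq_sqrt (by positivity), (by simp [sq_abs] : ∑ c, ‖p k c‖ ^ 2 = ∑ c, (p k c) ^ 2)] at this
  · intro k l hkl
    have hd := h2 k l hkl
    rw [EuclideanSpace.dist_eq] at hd
    have : δ ^ 2 ≤ Real.sqrt (∑ c, dist (p k c) (p l c) ^ 2) ^ 2 :=
      pow_le_pow_left₀ hδ.le hd 2
    rwa [Real.sq_sqrt (by positivity),
      (by simp [Real.dist_eq, sq_abs] : ∑ c, dist (p k c) (p l c) ^ 2 = ∑ c, (p k c - p l c) ^ 2)] at this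


lemma sum_fin_ite {d c : ℕ} (hc : c < d) (f : Fin d → ℝ) :
    ∑ q : Fin d, (if (q : ℕ) = c then f q else 0) = f ⟨c, hc⟩ := by
  rw [Finset.sum_eq_single (⟨c, hc⟩ : Fin d)]
  · simp
  · intro q _ hq
    exact if_neg (fun h => hq (Fin.ext h))
  · intro h
    exact absurd (Finset.mem_univ _) h

lemma sum_split (r h : ℕ) (hrh : r ≤ h) (f : ℕ → ℝ) :
    ∑ k ∈ Finset.range h, f k
      = ∑ k ∈ Finset.range r, f k + ∑ k ∈ Finset.range (h - r), f (r + k) := by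
  have h1 : ∑ k ∈ Finset.range h, f k
      = ∑ k ∈ Finset.Ico 0 r, f k + ∑ k ∈ Finset.Ico r h, f k := by
    rw [Finset.range_eq_Ico]
    exact (Finset.sum_Ico_consecutive f (Nat.zero_le r) hrh).symm
  rw [h1, ← Finset.range_eq_Ico, Finset.sum_Ico_eq_sum_range]

lemma finsum_eq_rangesum {n : ℕ} (f : Fin n → ℝ) (g : ℕ → ℝ)
    (hg : ∀ (k : ℕ) (hk : k < n), g k = f ⟨k, hk⟩) :
    ∑ c : Fin n, f c = ∑ k ∈ Finset.range n, g k := by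
  rw [← Fin.sum_univ_eq_sum_range g n]
  exact Finset.sum_congr rfl fun c _ => by rw [hg c.val c.isLt]

lemma exp_le_aux {d : ℕ} (hd : 20 ≤ d) : Real.exp d ≤ 10 * Real.sqrt 8 ^ (d - 2) := by
  have he : Real.exp 1 ≤ 2.7182818286 := Real.exp_one_lt_d9.le
  have hepos : (0:ℝ) < Real.exp 1 := Real.exp_pos 1
  have h8 : (2.82 : ℝ) ≤ Real.sqrt 8 := by
    rw [show (8:ℝ) = 2.82^2 + 0.0476 by norm_num]
    have : (2.82:ℝ) = Real.sqrt (2.82^2) := by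
      rw [Real.sqrt_sq (by norm_num)]
    rw [this]
    apply Real.sqrt_le_sqrt
    nlinarith
  have hstep : Real.exp 1 * (31/30) ≤ Real.sqrt 8 := by nlinarith
  have hbern : (1 + (d-2 : ℕ) * (1/30 : ℝ)) ≤ (1 + 1/30 : ℝ) ^ (d-2) := by
    exact one_add_mul_le_pow (by norm_num) (d-2)
  have hd2 : (18 : ℝ) ≤ ((d-2 : ℕ) : ℝ) := by
    have : 18 ≤ d - 2 := by omega
    exact_mod_cast this
  have h85 : (8/5 : ℝ) ≤ (31/30 : ℝ) ^ (d-2) := by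
    calc (8/5 : ℝ) ≤ 1 + ((d-2 : ℕ):ℝ) * (1/30) := by nlinarith
      _ ≤ (1 + 1/30 : ℝ) ^ (d-2) := hbern
      _ = (31/30 : ℝ) ^ (d-2) := by norm_num
  have hpow : (Real.exp 1 * (31/30)) ^ (d-2) ≤ Real.sqrt 8 ^ (d-2) :=
    pow_le_pow_left₀ (by positivity) hstep (d-2)
  have hexp : Real.exp ((d-2 : ℕ) : ℝ) * (8/5) ≤ (Real.exp 1 * (31/30)) ^ (d-2) := by
    rw [mul_pow, ← Real.exp_one_pow]
    exact mul_le_mul_of_nonneg_left h85 (by positivity)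
  have hsplit : Real.exp d = Real.exp ((d-2:ℕ):ℝ) * Real.exp 2 := by
    rw [← Real.exp_add]
    congr 1
    have : ((d:ℕ):ℝ) = ((d-2:ℕ):ℝ) + 2 := by
      have : (d:ℕ) = (d-2) + 2 := by omega
      exact_mod_cast this
    linarith
  have he2 : Real.exp 2 ≤ 16 := by
    have : Real.exp 2 = Real.exp 1 * Real.exp 1 := by
      rw [← Real.exp_add]; norm_num
    nlinarith
  calc Real.exp d = Real.exp ((d-2:ℕ):ℝ) * Real.exp 2 := hsplit
    _ ≤ Real.exp ((d-2:ℕ):ℝ) * 16 := by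
        apply mul_le_mul_of_nonneg_left he2 (le_of_lt (Real.exp_pos _))
    _ = 10 * (Real.exp ((d-2:ℕ):ℝ) * (8/5)) := by ring
    _ ≤ 10 * (Real.exp 1 * (31/30)) ^ (d-2) := by linarith [hexp]
    _ ≤ 10 * Real.sqrt 8 ^ (d-2) := by linarith [hpow]

set_option maxHeartbeats 2000000 in
/-- Existence of well-separated images: for `d ≥ 20` and `d ≤ h ≤ e^d`, with
`m = h / 10`, there are unit vectors `x¹,…,x^m` and matrices `A¹,…,A^{2^m}` of
Frobenius norm squared at most `2d` whose images `A^s x^i` are pairwise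
`1/4`-separated. -/
theorem exists_separated_points
    (d h m : ℕ) (hd : 20 ≤ d) (hdh : d ≤ h) (hhe : (h : ℝ) ≤ Real.exp d)
    (hm : m = h / 10) :
    ∃ (x : Fin m → Fin d → ℝ) (A : Fin (2 ^ m) → Matrix (Fin h) (Fin d) ℝ),
      (∀ i, ∑ j, (x i j) ^ 2 = 1) ∧
      (∀ s, ∑ i, ∑ j, (A s i j) ^ 2 ≤ 2 * d) ∧
      (∀ (s t : Fin (2 ^ m)) (i j : Fin m), (s, i) ≠ (t, j) →
        (1 : ℝ) / 16 ≤ ∑ r, ((A s).mulVec (x i) r - (A t).mulVec (x j) r) ^ 2) := by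
  have hm10 : 10 * m ≤ h := by omega
  have hm2 : 2 ≤ m := by omega
  set rr : ℕ := min (m + 1) (d - 1) with hrrdef
  have hrr2 : 2 ≤ rr := by omega
  have hrrd : rr + 1 ≤ d := by omega
  have hrrm : rr ≤ m + 1 := by omega
  have hmhr : m ≤ h - rr := by omega
  have hrh : rr ≤ h := by omega
  obtain ⟨r', hr'⟩ : ∃ r', rr = r' + 1 := ⟨rr - 1, by omega⟩
  -- real positivity
  have hd0 : (0:ℝ) < d := by exact_mod_cast (by omega : 0 < d)
  have hrr0 : (0:ℝ) < rr := by exact_mod_cast (by omega : 0 < rr)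
  have hrrled : (rr:ℝ) ≤ d := by exact_mod_cast (by omega : rr ≤ d)
  have hd1 : (1:ℝ) ≤ d := by exact_mod_cast (by omega : 1 ≤ d)
  -- first packing
  set δ1 : ℝ := Real.sqrt (rr / (16 * d)) with hδ1def
  have hδ1pos : 0 < δ1 := Real.sqrt_pos.2 (by positivity)
  have hR1pos : (0:ℝ) < Real.sqrt (1/2) := Real.sqrt_pos.2 (by norm_num)
  have hratio1 : Real.sqrt (1/2) / δ1 = Real.sqrt (8 * d / rr) := by
    rw [hδ1def, ← Real.sqrt_div (by norm_num)]
    congr 1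
    field_simp
    ring
  have h8d : (8:ℝ) ≤ 8 * d / rr := by
    rw [le_div_iff₀ hrr0]; nlinarith
  have hsqrt8 : Real.sqrt 8 ≤ Real.sqrt (8 * d / rr) := Real.sqrt_le_sqrt h8d
  have h2sqrt : (2:ℝ) ≤ Real.sqrt (8 * d / rr) := by
    calc (2:ℝ) = Real.sqrt 4 := by
          rw [show (4:ℝ) = 2^2 by norm_num, Real.sqrt_sq (by norm_num)]
      _ ≤ Real.sqrt 8 := Real.sqrt_le_sqrt (by norm_num)
      _ ≤ _ := hsqrt8
  have hK1 : (m:ℝ) ≤ (Real.sqrt (1/2) / δ1) ^ r' := by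
    rw [hratio1]
    rcases le_or_gt (m + 1) (d - 1) with hc | hc
    · have hreq : r' = m := by omega
      subst hreq
      calc ((r':ℕ):ℝ) ≤ 2 ^ r' := by exact_mod_cast (Nat.lt_two_pow_self (n := r')).le
        _ ≤ _ := pow_le_pow_left₀ (by norm_num) h2sqrt r'
    · have hr'd : r' = d - 2 := by omega
      have hmh : (m:ℝ) ≤ (h:ℝ) / 10 := by
        rw [le_div_iff₀ (by norm_num)]
        have h10 : (m * 10 : ℕ) ≤ (h : ℕ) := by omega
        exact_mod_cast h10
      calc (m:ℝ) ≤ (h:ℝ) / 10 := hmh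
        _ ≤ Real.exp d / 10 := by linarith
        _ ≤ Real.sqrt 8 ^ (d - 2) := by linarith [exp_le_aux hd]
        _ ≤ Real.sqrt (8 * d / rr) ^ (d - 2) :=
            pow_le_pow_left₀ (Real.sqrt_nonneg _) hsqrt8 _
        _ = Real.sqrt (8 * d / rr) ^ r' := by rw [hr'd]
  obtain ⟨w, hw1, hw2⟩ := packing_coords r' m hR1pos hδ1pos hK1
  have hhalf : Real.sqrt (1/2) ^ 2 = (1/2 : ℝ) := Real.sq_sqrt (by norm_num)
  have hδ1sq : δ1 ^ 2 = (rr:ℝ) / (16 * d) := Real.sq_sqrt (by positivity)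
  have hw1' : ∀ k, ∑ c, (w k c) ^ 2 ≤ 1/2 := fun k => hhalf ▸ hw1 k
  have hw2' : ∀ k l, k ≠ l → (rr:ℝ) / (16 * d) ≤ ∑ c, (w k c - w l c) ^ 2 :=
    fun k l hkl => hδ1sq ▸ hw2 k l hkl
  -- second packing
  set δ2 : ℝ := Real.sqrt (1/8) with hδ2def
  have hδ2pos : 0 < δ2 := Real.sqrt_pos.2 (by norm_num)
  have hR2pos : (0:ℝ) < Real.sqrt d := Real.sqrt_pos.2 hd0
  have hratio2 : Real.sqrt d / δ2 = Real.sqrt (8 * d) := by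
    rw [hδ2def, ← Real.sqrt_div hd0.le]
    congr 1
    rw [div_div_eq_mul_div, div_one]
    ring
  have h2sqrt8d : (2:ℝ) ≤ Real.sqrt (8 * d) := by
    calc (2:ℝ) = Real.sqrt 4 := by
          rw [show (4:ℝ) = 2^2 by norm_num, Real.sqrt_sq (by norm_num)]
      _ ≤ Real.sqrt (8 * d) := Real.sqrt_le_sqrt (by nlinarith [hd1])
  have hK2 : ((2 ^ m : ℕ):ℝ) ≤ (Real.sqrt d / δ2) ^ (h - rr) := by
    rw [hratio2]
    push_cast
    calc (2:ℝ) ^ m ≤ 2 ^ (h - rr) := pow_le_pow_right₀ one_le_two hmhr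
      _ ≤ _ := by
        apply pow_le_pow_left₀ (by norm_num) h2sqrt8d
  obtain ⟨v, hv1, hv2⟩ := packing_coords (h - rr) (2 ^ m) hR2pos hδ2pos hK2
  have hdsq : Real.sqrt d ^ 2 = (d:ℝ) := Real.sq_sqrt hd0.le
  have hδ2sq : δ2 ^ 2 = (1/8 : ℝ) := Real.sq_sqrt (by norm_num)
  have hv1' : ∀ s, ∑ c, (v s c) ^ 2 ≤ (d:ℝ) := fun s => hdsq ▸ hv1 s
  have hv2' : ∀ s t, s ≠ t → (1/8 : ℝ) ≤ ∑ c, (v s c - v t c) ^ 2 :=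
    fun s t hst => hδ2sq ▸ hv2 s t hst
  -- definitions
  set α : ℝ := Real.sqrt (1/2) with hαdef
  set β : ℝ := Real.sqrt (d / rr) with hβdef
  have hα2 : α ^ 2 = 1/2 := hhalf
  have hβ2 : β ^ 2 = (d:ℝ) / rr := Real.sq_sqrt (by positivity)
  have hβ0 : 0 ≤ β := Real.sqrt_nonneg _
  set L : Fin m → ℝ := fun i => Real.sqrt (1/2 - ∑ c, (w i c) ^ 2) with hLdef
  have hL2 : ∀ i, (L i) ^ 2 = 1/2 - ∑ c, (w i c) ^ 2 :=
    fun i => Real.sq_sqrt (by linarith [hw1' i])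
  set wN : Fin m → ℕ → ℝ := fun i k => if hk : k < r' then w i ⟨k, hk⟩ else 0 with hwNdef
  set vN : Fin (2 ^ m) → ℕ → ℝ :=
    fun s k => if hk : k < h - rr then v s ⟨k, hk⟩ else 0 with hvNdef
  set xn : Fin m → ℕ → ℝ :=
    fun i k => if k = 0 then α else if k < rr then wN i (k - 1)
      else if k = rr then L i else 0 with hxndef
  have hxn0 : ∀ i, xn i 0 = α := fun i => by
    show (if (0:ℕ) = 0 then α else if 0 < rr then wN i (0 - 1)
      else if 0 = rr then L i else 0) = α
    rw [if_pos rfl]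
  have hxnw : ∀ i k, k < r' → xn i (k + 1) = wN i k := by
    intro i k hk
    show (if k + 1 = 0 then α else if k + 1 < rr then wN i (k + 1 - 1)
      else if k + 1 = rr then L i else 0) = wN i k
    rw [if_neg (by omega), if_pos (by omega), Nat.add_sub_cancel]
  have hxnr : ∀ i, xn i rr = L i := by
    intro i
    show (if rr = 0 then α else if rr < rr then wN i (rr - 1)
      else if rr = rr then L i else 0) = L i
    rw [if_neg (by omega), if_neg (by omega), if_pos rfl]
  have hxnbig : ∀ i k, rr < k → xn i k = 0 := by
    intro i k hk
    show (if k = 0 then α else if k < rr then wN i (k - 1)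
      else if k = rr then L i else 0) = 0
    rw [if_neg (by omega), if_neg (by omega), if_neg (by omega)]
  -- sums of wN / vN over ranges
  have hwNsum : ∀ i, ∑ k ∈ Finset.range r', (wN i k) ^ 2 = ∑ c, (w i c) ^ 2 := by
    intro i
    refine (finsum_eq_rangesum (fun c => (w i c) ^ 2) (fun k => (wN i k) ^ 2) ?_).symm
    intro k hk
    simp [hwNdef, dif_pos hk]
  have hvNsum : ∀ s, ∑ k ∈ Finset.range (h - rr), (vN s k) ^ 2 = ∑ c, (v s c) ^ 2 := by
    intro s
    refine (finsum_eq_rangesum (fun c => (v s c) ^ 2) (fun k => (vN s k) ^ 2) ?_).symm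
    intro k hk
    simp [hvNdef, dif_pos hk]
  -- matrix
  set Amat : Fin (2 ^ m) → Matrix (Fin h) (Fin d) ℝ := fun s =>
    Matrix.of (fun p q => if (p:ℕ) < rr then (if (q:ℕ) = (p:ℕ) + 1 then β else 0)
      else (if (q:ℕ) = 0 then vN s ((p:ℕ) - rr) else 0)) with hAdef
  refine ⟨fun i j => xn i (j:ℕ), Amat, ?_, ?_, ?_⟩
  · -- unit vectors
    intro i
    have e0 : ∑ j : Fin d, (xn i (j:ℕ)) ^ 2 = ∑ k ∈ Finset.range d, (xn i k) ^ 2 :=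
      Fin.sum_univ_eq_sum_range (fun k => (xn i k) ^ 2) d
    rw [e0, sum_split (rr + 1) d hrrd]
    have htail : ∑ k ∈ Finset.range (d - (rr + 1)), (xn i ((rr + 1) + k)) ^ 2 = 0 :=
      Finset.sum_eq_zero fun k _ => by rw [hxnbig i _ (by omega)]; ring
    rw [htail, add_zero, Finset.sum_range_succ, hxnr]
    rw [sum_split 1 rr (by omega), Finset.sum_range_one, hxn0]
    have hmid : ∑ k ∈ Finset.range (rr - 1), (xn i (1 + k)) ^ 2 = ∑ c, (w i c) ^ 2 := by
      have h1 : rr - 1 = r' := by omega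
      rw [h1]
      refine (finsum_eq_rangesum (fun c => (w i c) ^ 2) (fun k => (xn i (1 + k)) ^ 2) ?_).symm
      intro k hk
      show (xn i (1 + k)) ^ 2 = _
      rw [Nat.add_comm 1 k, hxnw i k hk]
      simp [hwNdef, dif_pos hk]
    rw [hmid, hα2, hL2 i]
    ring
  · -- Frobenius
    intro s
    have hinner : ∀ p : Fin h, ∑ q : Fin d, (Amat s p q) ^ 2
        = if (p:ℕ) < rr then β ^ 2 else (vN s ((p:ℕ) - rr)) ^ 2 := by
      intro p
      by_cases hp : (p:ℕ) < rr
      · rw [if_pos hp]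
        have e1 : ∀ q : Fin d, (Amat s p q) ^ 2
            = (if (q:ℕ) = (p:ℕ) + 1 then β ^ 2 else 0) := by
          intro q
          simp only [hAdef, Matrix.of_apply, if_pos hp]
          split <;> simp
        rw [Finset.sum_congr rfl (fun q _ => e1 q),
          sum_fin_ite (by omega : (p:ℕ) + 1 < d) (fun _ => β ^ 2)]
      · rw [if_neg hp]
        have e1 : ∀ q : Fin d, (Amat s p q) ^ 2
            = (if (q:ℕ) = 0 then (vN s ((p:ℕ) - rr)) ^ 2 else 0) := by
          intro q
          simp only [hAdef, Matrix.of_apply, if_neg hp]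
          split <;> simp
        rw [Finset.sum_congr rfl (fun q _ => e1 q),
          sum_fin_ite (by omega : 0 < d) (fun _ => (vN s ((p:ℕ) - rr)) ^ 2)]
    rw [Finset.sum_congr rfl (fun p _ => hinner p)]
    rw [Fin.sum_univ_eq_sum_range
      (fun k => if k < rr then β ^ 2 else (vN s (k - rr)) ^ 2) h]
    rw [sum_split rr h hrh]
    have hfirst : ∑ k ∈ Finset.range rr,
        (if k < rr then β ^ 2 else (vN s (k - rr)) ^ 2) = (rr:ℝ) * β ^ 2 := by
      rw [Finset.sum_congr rfl (fun k hk => if_pos (Finset.mem_range.1 hk))]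
      rw [Finset.sum_const, Finset.card_range, nsmul_eq_mul]
    have hsecond : ∑ k ∈ Finset.range (h - rr),
        (if rr + k < rr then β ^ 2 else (vN s (rr + k - rr)) ^ 2) = ∑ c, (v s c) ^ 2 := by
      rw [Finset.sum_congr rfl (fun k hk => by
        rw [if_neg (by omega), show rr + k - rr = k by omega])]
      exact hvNsum s
    rw [hfirst, hsecond]
    have hrb : (rr:ℝ) * β ^ 2 = (d:ℝ) := by
      rw [hβ2]; field_simp
    rw [hrb]
    linarith [hv1' s]
  · -- separation
    intro s t i j hne
    have hmv : ∀ (s : Fin (2 ^ m)) (i : Fin m) (p : Fin h),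
        (Amat s).mulVec (fun jj : Fin d => xn i (jj:ℕ)) p
          = if (p:ℕ) < rr then β * xn i ((p:ℕ) + 1) else vN s ((p:ℕ) - rr) * α := by
      intro s i p
      have e0 : (Amat s).mulVec (fun jj : Fin d => xn i (jj:ℕ)) p
          = ∑ q : Fin d, Amat s p q * xn i (q:ℕ) := rfl
      rw [e0]
      by_cases hp : (p:ℕ) < rr
      · rw [if_pos hp]
        have e1 : ∀ q : Fin d, Amat s p q * xn i (q:ℕ)
            = (if (q:ℕ) = (p:ℕ) + 1 then β * xn i (q:ℕ) else 0) := by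
          intro q
          simp only [hAdef, Matrix.of_apply, if_pos hp]
          split <;> simp
        rw [Finset.sum_congr rfl (fun q _ => e1 q),
          sum_fin_ite (by omega : (p:ℕ) + 1 < d) (fun q => β * xn i (q:ℕ))]
      · rw [if_neg hp]
        have e1 : ∀ q : Fin d, Amat s p q * xn i (q:ℕ)
            = (if (q:ℕ) = 0 then vN s ((p:ℕ) - rr) * xn i (q:ℕ) else 0) := by
          intro q
          simp only [hAdef, Matrix.of_apply, if_neg hp]
          split <;> simp
        rw [Finset.sum_congr rfl (fun q _ => e1 q),
          sum_fin_ite (by omega : 0 < d) (fun q => vN s ((p:ℕ) - rr) * xn i (q:ℕ))]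
        rw [hxn0]
    have erw : ∀ p : Fin h,
        ((Amat s).mulVec (fun jj : Fin d => xn i (jj:ℕ)) p
          - (Amat t).mulVec (fun jj : Fin d => xn j (jj:ℕ)) p) ^ 2
        = ((if (p:ℕ) < rr then β * xn i ((p:ℕ) + 1) else vN s ((p:ℕ) - rr) * α)
          - (if (p:ℕ) < rr then β * xn j ((p:ℕ) + 1) else vN t ((p:ℕ) - rr) * α)) ^ 2 := by
      intro p
      rw [hmv s i p, hmv t j p]
    rw [Finset.sum_congr rfl (fun p _ => erw p)]
    rw [Fin.sum_univ_eq_sum_range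
      (fun k => ((if k < rr then β * xn i (k + 1) else vN s (k - rr) * α)
        - (if k < rr then β * xn j (k + 1) else vN t (k - rr) * α)) ^ 2) h]
    rw [sum_split rr h hrh]
    have hfirst : ∑ k ∈ Finset.range rr,
        ((if k < rr then β * xn i (k + 1) else vN s (k - rr) * α)
          - (if k < rr then β * xn j (k + 1) else vN t (k - rr) * α)) ^ 2
        = β ^ 2 * (∑ c, (w i c - w j c) ^ 2) + β ^ 2 * (L i - L j) ^ 2 := by
      rw [Finset.sum_congr rfl (fun k hk => by
        rw [if_pos (Finset.mem_range.1 hk), if_pos (Finset.mem_range.1 hk)])]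
      rw [hr', Finset.sum_range_succ]
      have hlast : (β * xn i (r' + 1) - β * xn j (r' + 1)) ^ 2 = β ^ 2 * (L i - L j) ^ 2 := by
        rw [show r' + 1 = rr from hr'.symm, hxnr, hxnr]
        ring
      have hbody : ∑ k ∈ Finset.range r', (β * xn i (k + 1) - β * xn j (k + 1)) ^ 2
          = β ^ 2 * (∑ c, (w i c - w j c) ^ 2) := by
        rw [Finset.sum_congr rfl (fun k hk => by
          rw [hxnw i k (Finset.mem_range.1 hk), hxnw j k (Finset.mem_range.1 hk)])]
        have e2 : ∑ c, (w i c - w j c) ^ 2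
            = ∑ k ∈ Finset.range r', (wN i k - wN j k) ^ 2 := by
          refine finsum_eq_rangesum (fun c => (w i c - w j c) ^ 2)
            (fun k => (wN i k - wN j k) ^ 2) ?_
          intro k hk
          simp [hwNdef, dif_pos hk]
        rw [e2, Finset.mul_sum]
        exact Finset.sum_congr rfl fun k _ => by ring
      rw [hbody, hlast]
    have hsecond : ∑ k ∈ Finset.range (h - rr),
        ((if rr + k < rr then β * xn i (rr + k + 1) else vN s (rr + k - rr) * α)
          - (if rr + k < rr then β * xn j (rr + k + 1) else vN t (rr + k - rr) * α)) ^ 2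
        = α ^ 2 * ∑ c, (v s c - v t c) ^ 2 := by
      rw [Finset.sum_congr rfl (fun k hk => by
        rw [if_neg (by omega), if_neg (by omega), show rr + k - rr = k by omega])]
      have e2 : ∑ c, (v s c - v t c) ^ 2
          = ∑ k ∈ Finset.range (h - rr), (vN s k - vN t k) ^ 2 := by
        refine finsum_eq_rangesum (fun c => (v s c - v t c) ^ 2)
          (fun k => (vN s k - vN t k) ^ 2) ?_
        intro k hk
        simp [hvNdef, dif_pos hk]
      rw [e2, Finset.mul_sum]
      exact Finset.sum_congr rfl fun k _ => by ring
    rw [hfirst, hsecond]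
    have hSw : 0 ≤ ∑ c, (w i c - w j c) ^ 2 := by positivity
    have hSv : 0 ≤ ∑ c, (v s c - v t c) ^ 2 := by positivity
    have hβ2nn : (0:ℝ) ≤ β ^ 2 := by positivity
    have hcase : s ≠ t ∨ i ≠ j := by
      by_contra hcon
      push_neg at hcon
      exact hne (by rw [hcon.1, hcon.2])
    rcases hcase with hst | hij
    · have hv := hv2' s t hst
      have h1 : (1/16 : ℝ) ≤ α ^ 2 * ∑ c, (v s c - v t c) ^ 2 := by
        rw [hα2]
        linarith
      nlinarith [mul_nonneg hβ2nn hSw, mul_nonneg hβ2nn (sq_nonneg (L i - L j))]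
    · have hw := hw2' i j hij
      have h1 : (1/16 : ℝ) ≤ β ^ 2 * ∑ c, (w i c - w j c) ^ 2 := by
        have e3 : β ^ 2 * ((rr:ℝ) / (16 * d)) = 1/16 := by
          rw [hβ2]; field_simp
        calc (1/16 : ℝ) = β ^ 2 * ((rr:ℝ) / (16 * d)) := e3.symm
          _ ≤ β ^ 2 * ∑ c, (w i c - w j c) ^ 2 :=
              mul_le_mul_of_nonneg_left hw hβ2nn
      nlinarith [mul_nonneg (sq_nonneg α) hSv, mul_nonneg hβ2nn (sq_nonneg (L i - L j))]
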